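/- Let n ≥ 1 and q ∈ ℂ with 0 < |q| < 1. Let Δ be a linear operator on ℂ((z⁻¹)) that commutes with the dilation ĥ, is skew-symmetric with respect to the residue pairing (Res((Δf)·g) = −Res(f·(Δg)) for all f, g), and satisfies Δ((2 − ĥⁿ − ĥ⁻ⁿ)f) = 0 for every f ∈ ℂ((z⁻¹)). Then Δ = 0. (Key step of Theorem 2.8 and Theorem 6.2: uniqueness of the Poisson bracket satisfying the involutivity condition.) -/

import Mathlib

noncomputable section

/-- Dilation operator: `(dil q k a)(z) = a(q^k z)`.
A formal Laurent series `a(z) = ∑_{m ≤ N} a_m z^m ∈ ℂ((z⁻¹))` is encoded as the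
Hahn series `F : LaurentSeries ℂ` with `F.coeff j = a_{-j}` (support bounded below,
i.e. finitely many positive powers of `z`); dilation sends `a_m ↦ q^{k m} a_m`,
i.e. `coeff j ↦ q^{-(k j)} * coeff j`. -/
def dil (q : ℂ) (k : ℤ) (F : LaurentSeries ℂ) : LaurentSeries ℂ where
  coeff := fun j => q ^ (-(k * j)) * F.coeff j
  isPWO_support' := by
    apply F.isPWO_support'.mono
    intro j hj
    simp only [Function.mem_support] at hj ⊢
    intro h
    exact hj (by rw [h, mul_zero])

/-- `Res a = a₀`, the coefficient of `z⁰`. -/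
def Res (F : LaurentSeries ℂ) : ℂ := F.coeff 0

/-- The bilinear pairing `⟨F, G⟩ = ∑_j Res (F_j G_j)` on `H_n = (ℂ((z⁻¹)))^n`. -/
def pair {n : ℕ} (F G : Fin n → LaurentSeries ℂ) : ℂ := ∑ j, Res (F j * G j)

/-- The operator `ĥτ̂_n` on `H_n`: `(ĥτ̂_n F)_j (z) = F_{j+1 mod n} (q z)`. -/
def htau (q : ℂ) {n : ℕ} [NeZero n] (F : Fin n → LaurentSeries ℂ) :
    Fin n → LaurentSeries ℂ := fun j => dil q 1 (F (j + 1))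

/-- `F ∈ U_n`, i.e. `F = (u(z), u(q⁻¹ z), …, u(q^{-(n-1)} z))` for some `u ∈ ℂ((z⁻¹))`. -/
def InU (q : ℂ) {n : ℕ} (F : Fin n → LaurentSeries ℂ) : Prop :=
  ∃ u : LaurentSeries ℂ, ∀ j : Fin n, F j = dil q (-((j : ℕ) : ℤ)) u

end

noncomputable section Aux

lemma dil_coeff (q : ℂ) (k : ℤ) (F : LaurentSeries ℂ) (j : ℤ) :
    (dil q k F).coeff j = q ^ (-(k * j)) * F.coeff j := rfl

lemma denom_ne (n : ℕ) (hn : 1 ≤ n) (q : ℂ)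
    (hq0 : 0 < ‖q‖) (hq1 : ‖q‖ < 1) (j : ℤ) (hj : j ≠ 0) :
    (2 : ℂ) - q ^ (-((n : ℤ) * j)) - q ^ ((n : ℤ) * j) ≠ 0 := by
  have hqne : q ≠ 0 := by
    intro h; simp [h] at hq0
  set t : ℂ := q ^ ((n : ℤ) * j) with ht
  have htne : t ≠ 0 := zpow_ne_zero _ hqne
  have habs : ‖t‖ ≠ 1 := by
    rw [ht, norm_zpow]
    intro h
    have h2 := zpow_right_injective₀ hq0 (ne_of_lt hq1) (h.trans (zpow_zero _).symm)
    have hn0 : (n : ℤ) ≠ 0 := Int.natCast_ne_zero.mpr (by omega)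
    exact hj ((mul_eq_zero.mp h2).resolve_left hn0)
  intro h
  rw [zpow_neg] at h
  have h2 : (2 : ℂ) * t - 1 - t * t = 0 := by
    have := congrArg (· * t) h
    field_simp at this
    linear_combination this
  have : (t - 1) ^ 2 = 0 := by ring_nf; linear_combination -h2
  have ht1 : t = 1 := sub_eq_zero.mp (pow_eq_zero_iff (n := 2) (by norm_num) |>.mp this)
  exact habs (by rw [ht1]; simp)

def solveF (q : ℂ) (n : ℕ) (G : LaurentSeries ℂ) : LaurentSeries ℂ where
  coeff := fun j => G.coeff j / ((2 : ℂ) - q ^ (-((n : ℤ) * j)) - q ^ ((n : ℤ) * j))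
  isPWO_support' := by
    apply G.isPWO_support'.mono
    intro j hj
    simp only [Function.mem_support] at hj ⊢
    intro h
    exact hj (by rw [h, zero_div])

lemma solve_spec (n : ℕ) (hn : 1 ≤ n) (q : ℂ)
    (hq0 : 0 < ‖q‖) (hq1 : ‖q‖ < 1)
    (G : LaurentSeries ℂ) (hG : G.coeff 0 = 0) :
    (2 : ℂ) • solveF q n G - dil q (n : ℤ) (solveF q n G) - dil q (-(n : ℤ)) (solveF q n G) = G := by
  have hco : ∀ j, (solveF q n G).coeff j
      = G.coeff j / ((2 : ℂ) - q ^ (-((n : ℤ) * j)) - q ^ ((n : ℤ) * j)) := fun _ => rfl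
  ext j
  rw [HahnSeries.coeff_sub, HahnSeries.coeff_sub, HahnSeries.coeff_smul, dil_coeff, dil_coeff,
    hco, smul_eq_mul, show -(-(n : ℤ) * j) = (n : ℤ) * j by ring]
  by_cases hj : j = 0
  · subst hj
    simp [hG]
  · have hd := denom_ne n hn q hq0 hq1 j hj
    set A := q ^ (-((n : ℤ) * j))
    set B := q ^ ((n : ℤ) * j)
    set D := (2 : ℂ) - A - B with hD
    rw [show 2 * (G.coeff j / D) - A * (G.coeff j / D) - B * (G.coeff j / D)
        = G.coeff j / D * D by rw [hD]; ring]
    exact div_mul_cancel₀ _ hd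

end Aux

/-- Key step of Theorems 2.8 and 6.2 (uniqueness of the involutive bracket):
a linear operator `Δ` on `ℂ((z⁻¹))` commuting with the dilation `ĥ`,
skew-symmetric with respect to the residue pairing, and annihilating
`(2 − ĥⁿ − ĥ⁻ⁿ) f` for every `f`, is zero. -/
theorem uniqueness_Delta (n : ℕ) (hn : 1 ≤ n) (q : ℂ)
    (hq0 : 0 < ‖q‖) (hq1 : ‖q‖ < 1)
    (Δ : LaurentSeries ℂ →ₗ[ℂ] LaurentSeries ℂ)
    (hcomm : ∀ f, Δ (dil q 1 f) = dil q 1 (Δ f))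
    (hskew : ∀ f g, Res (Δ f * g) = - Res (f * Δ g))
    (hker : ∀ f, Δ ((2 : ℂ) • f - dil q (n : ℤ) f - dil q (-(n : ℤ)) f) = 0) :
    Δ = 0 := by
  have hqne : q ≠ 0 := by intro h; simp [h] at hq0
  -- Δ kills anything with zero constant term
  have hzero : ∀ G : LaurentSeries ℂ, G.coeff 0 = 0 → Δ G = 0 := by
    intro G hG
    have := hker (solveF q n G)
    rwa [solve_spec n hn q hq0 hq1 G hG] at this
  -- dil q 1 fixes 1
  have hdil1 : dil q 1 (1 : LaurentSeries ℂ) = 1 := by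
    ext j
    rw [dil_coeff]
    rcases eq_or_ne j 0 with h | h
    · simp [h]
    · simp [HahnSeries.coeff_one, h]
  -- Δ 1 is dil-invariant hence supported at 0
  have hD1 : ∀ j : ℤ, j ≠ 0 → (Δ 1).coeff j = 0 := by
    intro j hj
    have h := hcomm 1
    rw [hdil1] at h
    have hcj : (Δ 1).coeff j = q ^ (-(1 * j)) * (Δ 1).coeff j := by
      conv_lhs => rw [h, dil_coeff]
    have hne : q ^ (-(1 * j)) ≠ 1 := by
      intro h1
      have h2 := zpow_right_injective₀ hq0 (ne_of_lt hq1)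
        (by rw [← norm_zpow, h1]; simp : ‖q‖ ^ (-(1*j)) = ‖q‖ ^ (0:ℤ))
      omega
    by_contra hc
    exact hne (mul_right_cancel₀ hc (by rw [← hcj, one_mul]))
  -- constant term of Δ 1 is 0 via skew symmetry
  have hD10 : (Δ 1).coeff 0 = 0 := by
    have h := hskew 1 1
    rw [mul_one, one_mul] at h
    unfold Res at h
    linear_combination h / 2
  have hD1z : Δ 1 = 0 := by
    ext j
    rcases eq_or_ne j 0 with h | h
    · simpa [h] using hD10
    · simpa using hD1 j h
  apply LinearMap.ext
  intro F
  have hdecomp : F = F.coeff 0 • (1 : LaurentSeries ℂ) + (F - F.coeff 0 • 1) := by abel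
  rw [LinearMap.zero_apply, hdecomp, map_add, map_smul, hD1z, smul_zero, zero_add]
  apply hzero
  simp [HahnSeries.coeff_sub, HahnSeries.coeff_smul, HahnSeries.coeff_one]
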